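/- The dual Jacobi–Trudi identity holds: for a partition λ with conjugate λ' of length at most m, s_λ = det(e_{λ'_i − i + j})_{i,j=1}^{m}, where e_0 = 1 and e_k = 0 for k < 0. -/

import Mathlib

open MvPolynomial in
/-- The cells of the skew diagram `lam/mu`: pairs `(i, j)` (row `i`, column `j`,
both 0-indexed, rows increasing downwards) with `mu i ≤ j < lam i`. -/
def skewCells {L : ℕ} (lam mu : Fin L → ℕ) : Finset (Fin L × ℕ) :=
  (Finset.univ ×ˢ Finset.range (Finset.univ.sup lam)).filter
    fun p => mu p.1 ≤ p.2 ∧ p.2 < lam p.1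

/-- A filling of the skew shape `lam/mu` with entries in `Fin nv` is a semistandard
Young tableau if rows weakly increase (left to right) and columns strictly
increase (top to bottom). -/
def IsSSYT {nv L : ℕ} (lam mu : Fin L → ℕ)
    (T : { x // x ∈ skewCells lam mu } → Fin nv) : Prop :=
  (∀ c c' : { x // x ∈ skewCells lam mu },
      c.1.1 = c'.1.1 → c.1.2 ≤ c'.1.2 → T c ≤ T c') ∧
  (∀ c c' : { x // x ∈ skewCells lam mu },
      c.1.2 = c'.1.2 → c.1.1 < c'.1.1 → T c < T c')

open scoped Classical in
/-- The skew Schur polynomial of shape `lam/mu` in `nv` variables: the generating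
function of semistandard Young tableaux of shape `lam/mu` with entries in `Fin nv`. -/
noncomputable def skewSchur (nv : ℕ) {L : ℕ} (lam mu : Fin L → ℕ) :
    MvPolynomial (Fin nv) ℤ :=
  ∑ T : { x // x ∈ skewCells lam mu } → Fin nv,
    if IsSSYT lam mu T then ∏ c : { x // x ∈ skewCells lam mu }, MvPolynomial.X (T c)
    else 0

open Finset

variable {nv : ℕ}

/-- swap the parts below `t`: keep the part of `B` below `t` and the part of `A` at or above `t`. -/
def mix (A B : Finset (Fin nv)) (t : ℕ) : Finset (Fin nv) :=
  (B.filter fun s => s.val < t) ∪ (A.filter fun s => ¬ s.val < t)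

def cnt (A : Finset (Fin nv)) (t : ℕ) : ℕ := (A.filter fun s => s.val < t).card

lemma cnt_zero (A : Finset (Fin nv)) : cnt A 0 = 0 := by simp [cnt]

lemma cnt_of_le {A : Finset (Fin nv)} {t : ℕ} (h : nv ≤ t) : cnt A t = A.card := by
  unfold cnt
  congr 1
  apply Finset.filter_true_of_mem
  intro x _
  exact lt_of_lt_of_le x.isLt h

lemma cnt_mono (A : Finset (Fin nv)) : Monotone (cnt A) := by
  intro a b hab
  apply Finset.card_le_card
  exact Finset.monotone_filter_right A (fun x _ hx => lt_of_lt_of_le hx hab)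

lemma cnt_succ_le (A : Finset (Fin nv)) (t : ℕ) :
    cnt A (t + 1) ≤ cnt A t + 1 := by
  classical
  unfold cnt
  have hsub : A.filter (fun s => s.val < t + 1) ⊆
      (A.filter (fun s => s.val < t)) ∪ (A.filter (fun s => s.val = t)) := by
    intro x hx
    simp only [Finset.mem_filter, Finset.mem_union] at hx ⊢
    rcases Nat.lt_succ_iff_lt_or_eq.mp hx.2 with h | h
    · exact Or.inl ⟨hx.1, h⟩
    · exact Or.inr ⟨hx.1, h⟩
  have hone : (A.filter (fun s => s.val = t)).card ≤ 1 := by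
    apply Finset.card_le_one.mpr
    intro a ha b hb
    simp only [Finset.mem_filter] at ha hb
    exact Fin.ext (ha.2.trans hb.2.symm)
  calc (A.filter (fun s => s.val < t + 1)).card
      ≤ ((A.filter (fun s => s.val < t)) ∪ (A.filter (fun s => s.val = t))).card :=
        Finset.card_le_card hsub
    _ ≤ (A.filter (fun s => s.val < t)).card + (A.filter (fun s => s.val = t)).card :=
        Finset.card_union_le _ _
    _ ≤ (A.filter (fun s => s.val < t)).card + 1 := by omega

lemma mix_disj (A B : Finset (Fin nv)) (t : ℕ) :
    Disjoint (B.filter fun s => s.val < t) (A.filter fun s => ¬ s.val < t) := by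
  apply Finset.disjoint_filter_filter'
  exact disjoint_compl_right

lemma cnt_mix_of_le {A B : Finset (Fin nv)} {t t₀ : ℕ} (h : t ≤ t₀) :
    cnt (mix A B t₀) t = cnt B t := by
  classical
  unfold cnt mix
  rw [Finset.filter_union]
  rw [Finset.card_union_of_disjoint]
  · have h1 : ((B.filter fun s => s.val < t₀).filter fun s => s.val < t)
        = B.filter fun s => s.val < t := by
      rw [Finset.filter_filter]
      apply Finset.filter_congr
      intro x _
      constructor
      · rintro ⟨_, h2⟩; exact h2
      · intro h2; exact ⟨lt_of_lt_of_le h2 h, h2⟩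
    have h2 : ((A.filter fun s => ¬ s.val < t₀).filter fun s => s.val < t) = ∅ := by
      rw [Finset.filter_filter]
      apply Finset.filter_false_of_mem
      intro x _
      rintro ⟨hn, hlt⟩
      exact hn (lt_of_lt_of_le hlt h)
    rw [h1, h2]
    simp
  · exact Finset.disjoint_filter_filter (mix_disj A B t₀)

lemma cnt_mix_of_ge {A B : Finset (Fin nv)} {t t₀ : ℕ} (h : t₀ ≤ t) :
    cnt (mix A B t₀) t + cnt A t₀ = cnt B t₀ + cnt A t := by
  classical
  unfold cnt mix
  rw [Finset.filter_union, Finset.card_union_of_disjoint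
    (Finset.disjoint_filter_filter (mix_disj A B t₀))]
  have h1 : ((B.filter fun s => s.val < t₀).filter fun s => s.val < t)
      = B.filter fun s => s.val < t₀ := by
    rw [Finset.filter_filter]
    apply Finset.filter_congr
    intro x _
    constructor
    · rintro ⟨h2, _⟩; exact h2
    · intro h2; exact ⟨h2, lt_of_lt_of_le h2 h⟩
  rw [h1]
  have h2 : A.filter (fun s => s.val < t) =
      (A.filter fun s => s.val < t₀) ∪ ((A.filter fun s => ¬ s.val < t₀).filter
        fun s => s.val < t) := by
    rw [Finset.filter_filter, ← Finset.filter_or]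
    apply Finset.filter_congr
    intro x _
    constructor
    · intro hx
      by_cases h3 : x.val < t₀
      · exact Or.inl h3
      · exact Or.inr ⟨h3, hx⟩
    · rintro (h3 | ⟨_, h3⟩)
      · exact lt_of_lt_of_le h3 h
      · exact h3
  have h3 : (A.filter (fun s => s.val < t)).card =
      (A.filter fun s => s.val < t₀).card +
      ((A.filter fun s => ¬ s.val < t₀).filter fun s => s.val < t).card := by
    rw [h2, Finset.card_union_of_disjoint]
    rw [Finset.disjoint_left]
    intro a ha hb
    simp only [Finset.mem_filter, not_lt] at ha hb
    omega
  omega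

lemma card_mix {A B : Finset (Fin nv)} (t₀ : ℕ) :
    (mix A B t₀).card + cnt A t₀ = cnt B t₀ + A.card := by
  classical
  have h := cnt_mix_of_ge (A := A) (B := B) (t := nv + t₀) (t₀ := t₀) (Nat.le_add_left _ _)
  have e1 : cnt (mix A B t₀) (nv + t₀) = (mix A B t₀).card := by
    unfold cnt; rw [Finset.filter_true_of_mem]; intro x _; exact lt_of_lt_of_le x.isLt (Nat.le_add_right _ _)
  have e2 : cnt A (nv + t₀) = A.card := by
    unfold cnt; rw [Finset.filter_true_of_mem]; intro x _; exact lt_of_lt_of_le x.isLt (Nat.le_add_right _ _)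
  rw [e1, e2] at h
  exact h

lemma mix_mix (A B : Finset (Fin nv)) (t : ℕ) :
    mix (mix A B t) (mix B A t) t = A := by
  classical
  unfold mix
  rw [Finset.filter_union, Finset.filter_union]
  have e1 : ((A.filter fun s => s.val < t).filter fun s => s.val < t)
      = A.filter fun s => s.val < t := by rw [Finset.filter_filter]; simp
  have e2 : ((B.filter fun s => ¬ s.val < t).filter fun s => s.val < t) = ∅ := by
    rw [Finset.filter_filter]; apply Finset.filter_false_of_mem; tauto
  have e3 : ((B.filter fun s => s.val < t).filter fun s => ¬ s.val < t) = ∅ := by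
    rw [Finset.filter_filter]; apply Finset.filter_false_of_mem; tauto
  have e4 : ((A.filter fun s => ¬ s.val < t).filter fun s => ¬ s.val < t)
      = A.filter fun s => ¬ s.val < t := by rw [Finset.filter_filter]; simp
  rw [e1, e2, e3, e4, Finset.union_empty, Finset.empty_union,
    Finset.filter_union_filter_not_eq]

lemma prod_mix_mul {M : Type*} [CommMonoid M] (A B : Finset (Fin nv)) (t : ℕ)
    (f : Fin nv → M) :
    (∏ x ∈ mix A B t, f x) * (∏ x ∈ mix B A t, f x) =
    (∏ x ∈ A, f x) * (∏ x ∈ B, f x) := by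
  classical
  unfold mix
  rw [Finset.prod_union (mix_disj A B t), Finset.prod_union (mix_disj B A t)]
  rw [← Finset.prod_filter_mul_prod_filter_not A (fun s => s.val < t) f,
      ← Finset.prod_filter_mul_prod_filter_not B (fun s => s.val < t) f]
  exact mul_mul_mul_comm _ _ _ _ |>.trans (by rw [mul_comm (∏ x ∈ B.filter fun s => s.val < t, f x)]) |>.trans (mul_mul_mul_comm _ _ _ _).symm



section ConfPart
variable {nv m : ℕ}

abbrev Config (nv m : ℕ) := Equiv.Perm (Fin m) × (Fin m → Finset (Fin nv))

def Cpos (C : Config nv m) (i : Fin m) (t : ℕ) : ℤ :=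
  (cnt (C.2 i) t : ℤ) - ((C.1 i : Fin m) : ℕ)

open scoped Classical in
noncomputable def Tset (C : Config nv m) : Finset ℕ :=
  (Finset.range (nv + 1)).filter fun t => ∃ i j : Fin m, i ≠ j ∧ Cpos C i t = Cpos C j t

noncomputable def t0 (C : Config nv m) (h : (Tset C).Nonempty) : ℕ := (Tset C).min' h

open scoped Classical in
noncomputable def Iset (C : Config nv m) (t : ℕ) : Finset (Fin m) :=
  Finset.univ.filter fun k => ∃ l, l ≠ k ∧ Cpos C l t = Cpos C k t

lemma Iset_nonempty (C : Config nv m) (h : (Tset C).Nonempty) :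
    (Iset C (t0 C h)).Nonempty := by
  classical
  have hmem : t0 C h ∈ Tset C := (Tset C).min'_mem h
  rw [Tset, Finset.mem_filter] at hmem
  obtain ⟨-, i, j, hne, heq⟩ := hmem
  exact ⟨i, by rw [Iset, Finset.mem_filter]; exact ⟨Finset.mem_univ _, j, hne.symm, heq.symm⟩⟩

noncomputable def ii (C : Config nv m) (h : (Tset C).Nonempty) : Fin m :=
  (Iset C (t0 C h)).min' (Iset_nonempty C h)

open scoped Classical in
noncomputable def Jset (C : Config nv m) (h : (Tset C).Nonempty) : Finset (Fin m) :=
  Finset.univ.filter fun l => l ≠ ii C h ∧ Cpos C l (t0 C h) = Cpos C (ii C h) (t0 C h)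

lemma Jset_nonempty (C : Config nv m) (h : (Tset C).Nonempty) :
    (Jset C h).Nonempty := by
  classical
  have hmem : ii C h ∈ Iset C (t0 C h) := (Iset C (t0 C h)).min'_mem _
  rw [Iset, Finset.mem_filter] at hmem
  obtain ⟨-, l, hne, heq⟩ := hmem
  exact ⟨l, by rw [Jset, Finset.mem_filter]; exact ⟨Finset.mem_univ _, hne, heq⟩⟩

noncomputable def jj (C : Config nv m) (h : (Tset C).Nonempty) : Fin m :=
  (Jset C h).min' (Jset_nonempty C h)

lemma jj_ne (C : Config nv m) (h : (Tset C).Nonempty) : jj C h ≠ ii C h := by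
  classical
  have hmem : jj C h ∈ Jset C h := (Jset C h).min'_mem _
  rw [Jset, Finset.mem_filter] at hmem
  exact hmem.2.1

lemma jj_pos_eq (C : Config nv m) (h : (Tset C).Nonempty) :
    Cpos C (jj C h) (t0 C h) = Cpos C (ii C h) (t0 C h) := by
  classical
  have hmem : jj C h ∈ Jset C h := (Jset C h).min'_mem _
  rw [Jset, Finset.mem_filter] at hmem
  exact hmem.2.2

open scoped Classical in
noncomputable def tswap (C : Config nv m) : Config nv m :=
  if h : (Tset C).Nonempty then
    (C.1 * Equiv.swap (ii C h) (jj C h),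
     fun k =>
       if k = ii C h then mix (C.2 (ii C h)) (C.2 (jj C h)) (t0 C h)
       else if k = jj C h then mix (C.2 (jj C h)) (C.2 (ii C h)) (t0 C h)
       else C.2 k)
  else C
end ConfPart

section PosLemmas
variable {nv m : ℕ}

lemma tswap_fst (C : Config nv m) (h : (Tset C).Nonempty) :
    (tswap C).1 = C.1 * Equiv.swap (ii C h) (jj C h) := by
  rw [tswap, dif_pos h]

lemma tswap_snd (C : Config nv m) (h : (Tset C).Nonempty) :
    (tswap C).2 = fun k =>
       if k = ii C h then mix (C.2 (ii C h)) (C.2 (jj C h)) (t0 C h)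
       else if k = jj C h then mix (C.2 (jj C h)) (C.2 (ii C h)) (t0 C h)
       else C.2 k := by
  rw [tswap, dif_pos h]

lemma pos_tswap_le (C : Config nv m) (h : (Tset C).Nonempty) {t : ℕ}
    (ht : t ≤ t0 C h) (k : Fin m) :
    Cpos (tswap C) k t = Cpos C (Equiv.swap (ii C h) (jj C h) k) t := by
  classical
  rw [Cpos, Cpos, tswap_fst C h, tswap_snd C h]
  simp only [Equiv.Perm.mul_apply]
  by_cases hki : k = ii C h
  · subst hki
    rw [if_pos rfl, Equiv.swap_apply_left, cnt_mix_of_le ht]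
  · by_cases hkj : k = jj C h
    · subst hkj
      rw [if_neg hki, if_pos rfl, Equiv.swap_apply_right, cnt_mix_of_le ht]
    · rw [if_neg hki, if_neg hkj, Equiv.swap_apply_of_ne_of_ne hki hkj]

lemma pos_tswap_ge (C : Config nv m) (h : (Tset C).Nonempty) {t : ℕ}
    (ht : t0 C h ≤ t) (k : Fin m) :
    Cpos (tswap C) k t = Cpos C k t := by
  classical
  have heq := jj_pos_eq C h
  rw [Cpos, Cpos] at heq
  rw [Cpos, Cpos, tswap_fst C h, tswap_snd C h]
  simp only [Equiv.Perm.mul_apply]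
  by_cases hki : k = ii C h
  · subst hki
    rw [if_pos rfl, Equiv.swap_apply_left]
    have hc := cnt_mix_of_ge (A := C.2 (ii C h)) (B := C.2 (jj C h)) (t := t) (t₀ := t0 C h) ht
    omega
  · by_cases hkj : k = jj C h
    · subst hkj
      rw [if_neg hki, if_pos rfl, Equiv.swap_apply_right]
      have hc := cnt_mix_of_ge (A := C.2 (jj C h)) (B := C.2 (ii C h)) (t := t) (t₀ := t0 C h) ht
      omega
    · rw [if_neg hki, if_neg hkj, Equiv.swap_apply_of_ne_of_ne hki hkj]

lemma Tset_tswap (C : Config nv m) (h : (Tset C).Nonempty) :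
    Tset (tswap C) = Tset C := by
  classical
  ext t
  rw [Tset, Tset, Finset.mem_filter, Finset.mem_filter]
  refine and_congr_right fun _ => ?_
  rcases le_total t (t0 C h) with ht | ht
  · constructor
    · rintro ⟨i, j, hne, heq⟩
      rw [pos_tswap_le C h ht, pos_tswap_le C h ht] at heq
      exact ⟨_, _, fun hc => hne ((Equiv.swap _ _).injective hc), heq⟩
    · rintro ⟨i, j, hne, heq⟩
      refine ⟨Equiv.swap (ii C h) (jj C h) i, Equiv.swap (ii C h) (jj C h) j,
        fun hc => hne ((Equiv.swap _ _).injective hc), ?_⟩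
      rw [pos_tswap_le C h ht, pos_tswap_le C h ht]
      simpa using heq
  · constructor
    · rintro ⟨i, j, hne, heq⟩
      rw [pos_tswap_ge C h ht, pos_tswap_ge C h ht] at heq
      exact ⟨i, j, hne, heq⟩
    · rintro ⟨i, j, hne, heq⟩
      exact ⟨i, j, hne, by rw [pos_tswap_ge C h ht, pos_tswap_ge C h ht]; exact heq⟩

end PosLemmas

section Stability
variable {nv m : ℕ}

lemma min'_congr {α : Type*} [LinearOrder α] {s t : Finset α} (hst : s = t)
    {hs : s.Nonempty} {ht : t.Nonempty} : s.min' hs = t.min' ht := by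
  subst hst; rfl

lemma tswap_nonempty (C : Config nv m) (h : (Tset C).Nonempty) :
    (Tset (tswap C)).Nonempty := by rw [Tset_tswap C h]; exact h

lemma t0_tswap (C : Config nv m) (h : (Tset C).Nonempty) :
    t0 (tswap C) (tswap_nonempty C h) = t0 C h := by
  rw [t0, t0]
  congr 1
  exact Tset_tswap C h

lemma Iset_tswap (C : Config nv m) (h : (Tset C).Nonempty) :
    Iset (tswap C) (t0 C h) = Iset C (t0 C h) := by
  classical
  rw [Iset, Iset]
  apply Finset.filter_congr
  intro k _
  constructor
  · rintro ⟨l, hne, heq⟩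
    rw [pos_tswap_ge C h le_rfl, pos_tswap_ge C h le_rfl] at heq
    exact ⟨l, hne, heq⟩
  · rintro ⟨l, hne, heq⟩
    exact ⟨l, hne, by rw [pos_tswap_ge C h le_rfl, pos_tswap_ge C h le_rfl]; exact heq⟩

lemma ii_tswap (C : Config nv m) (h : (Tset C).Nonempty) :
    ii (tswap C) (tswap_nonempty C h) = ii C h := by
  rw [ii, ii]
  exact min'_congr (by rw [t0_tswap C h, Iset_tswap C h])

lemma jj_tswap (C : Config nv m) (h : (Tset C).Nonempty) :
    jj (tswap C) (tswap_nonempty C h) = jj C h := by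
  classical
  rw [jj, jj]
  refine min'_congr ?_
  rw [Jset, Jset]
  apply Finset.filter_congr
  intro k _
  rw [t0_tswap C h, ii_tswap C h]
  constructor
  · rintro ⟨hne, heq⟩
    rw [pos_tswap_ge C h le_rfl, pos_tswap_ge C h le_rfl] at heq
    exact ⟨hne, heq⟩
  · rintro ⟨hne, heq⟩
    exact ⟨hne, by rw [pos_tswap_ge C h le_rfl, pos_tswap_ge C h le_rfl]; exact heq⟩

lemma tswap_tswap (C : Config nv m) (h : (Tset C).Nonempty) :
    tswap (tswap C) = C := by
  classical
  have h' := tswap_nonempty C h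
  apply Prod.ext
  · rw [tswap_fst (tswap C) h', tswap_fst C h, ii_tswap C h, jj_tswap C h,
      mul_assoc, Equiv.swap_mul_self, mul_one]
  · rw [tswap_snd (tswap C) h', tswap_snd C h, ii_tswap C h, jj_tswap C h, t0_tswap C h]
    funext k
    have hne := jj_ne C h
    have hne' : ii C h ≠ jj C h := fun e => hne e.symm
    by_cases hki : k = ii C h
    · subst hki
      simp [hne, hne', mix_mix]
    · by_cases hkj : k = jj C h
      · subst hkj
        simp [hne, hne', mix_mix]
      · simp only [if_neg hki, if_neg hkj]

lemma tswap_ne (C : Config nv m) (h : (Tset C).Nonempty) : tswap C ≠ C := by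
  intro hc
  have h1 : (tswap C).1 (ii C h) = C.1 (jj C h) := by
    rw [tswap_fst C h]
    simp [Equiv.Perm.mul_apply]
  rw [hc] at h1
  exact jj_ne C h (C.1.injective h1).symm

end Stability

section OkWt
open MvPolynomial
variable {nv m : ℕ}

def Ok (ν : Fin m → ℤ) (C : Config nv m) : Prop :=
  ∀ k, ((C.2 k).card : ℤ) = ν k + ((C.1 k : Fin m) : ℕ)

noncomputable def wt (S : Fin m → Finset (Fin nv)) : MvPolynomial (Fin nv) ℤ :=
  ∏ i, ∏ x ∈ S i, X x

lemma Ok_tswap {ν : Fin m → ℤ} (C : Config nv m) (h : (Tset C).Nonempty)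
    (hOk : Ok ν C) : Ok ν (tswap C) := by
  classical
  intro k
  have heq := jj_pos_eq C h
  rw [Cpos, Cpos] at heq
  rw [tswap_fst C h, tswap_snd C h]
  simp only [Equiv.Perm.mul_apply]
  by_cases hki : k = ii C h
  · subst hki
    rw [if_pos rfl, Equiv.swap_apply_left]
    have hc := card_mix (A := C.2 (ii C h)) (B := C.2 (jj C h)) (t0 C h)
    have hOki := hOk (ii C h)
    omega
  · by_cases hkj : k = jj C h
    · subst hkj
      rw [if_neg hki, if_pos rfl, Equiv.swap_apply_right]
      have hc := card_mix (A := C.2 (jj C h)) (B := C.2 (ii C h)) (t0 C h)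
      have hOkj := hOk (jj C h)
      omega
    · rw [if_neg hki, if_neg hkj, Equiv.swap_apply_of_ne_of_ne hki hkj]
      exact hOk k

lemma sign_tswap (C : Config nv m) (h : (Tset C).Nonempty) :
    Equiv.Perm.sign (tswap C).1 = - Equiv.Perm.sign C.1 := by
  rw [tswap_fst C h, Equiv.Perm.sign_mul, Equiv.Perm.sign_swap (jj_ne C h).symm,
    mul_neg_one]

lemma prod_pair_swap {M : Type*} [CommMonoid M] {i j : Fin m} (hne : i ≠ j)
    (f g : Fin m → M) (hij : f i * f j = g i * g j)
    (hoth : ∀ k, k ≠ i → k ≠ j → f k = g k) : ∏ k, f k = ∏ k, g k := by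
  classical
  have hjmem : j ∈ Finset.univ.erase i := Finset.mem_erase.mpr ⟨hne.symm, Finset.mem_univ _⟩
  rw [← Finset.mul_prod_erase Finset.univ f (Finset.mem_univ i),
      ← Finset.mul_prod_erase _ f hjmem,
      ← Finset.mul_prod_erase Finset.univ g (Finset.mem_univ i),
      ← Finset.mul_prod_erase _ g hjmem, ← mul_assoc, ← mul_assoc, hij]
  congr 1
  apply Finset.prod_congr rfl
  intro k hk
  rw [Finset.mem_erase, Finset.mem_erase] at hk
  exact hoth k hk.2.1 hk.1

lemma wt_tswap (C : Config nv m) (h : (Tset C).Nonempty) :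
    wt (tswap C).2 = wt C.2 := by
  classical
  rw [wt, wt]
  have hne' : ii C h ≠ jj C h := fun e => jj_ne C h e.symm
  apply prod_pair_swap hne'
  · rw [tswap_snd C h]
    simp only [if_pos rfl, if_neg (jj_ne C h), if_neg hne']
    exact prod_mix_mul _ _ _ _
  · intro k hki hkj
    rw [tswap_snd C h]
    simp only [if_neg hki, if_neg hkj]

open scoped Classical in
lemma cancel_sum (ν : Fin m → ℤ) :
    ∑ C ∈ Finset.univ.filter (fun C : Config nv m => Ok ν C ∧ (Tset C).Nonempty),
      (Equiv.Perm.sign C.1 : ℤ) • wt C.2 = 0 := by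
  classical
  apply Finset.sum_involution (fun C _ => tswap C)
  · intro C hC
    rw [Finset.mem_filter] at hC
    have h := hC.2.2
    rw [sign_tswap C h, wt_tswap C h]
    push_cast
    rw [neg_smul]
    exact add_neg_cancel _
  · intro C hC _
    rw [Finset.mem_filter] at hC
    exact tswap_ne C hC.2.2
  · intro C hC
    rw [Finset.mem_filter] at hC ⊢
    exact ⟨Finset.mem_univ _, Ok_tswap C hC.2.2 hC.2.1, tswap_nonempty C hC.2.2⟩
  · intro C hC
    rw [Finset.mem_filter] at hC
    exact tswap_tswap C hC.2.2

end OkWt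

section NoCoin
variable {nv m : ℕ}

lemma ivt (d : ℕ → ℤ) (hstep : ∀ t, d t ≤ d (t + 1) + 1) :
    ∀ (n a : ℕ), 0 ≤ d a → d (a + n) ≤ 0 → ∃ t, a ≤ t ∧ t ≤ a + n ∧ d t = 0 := by
  intro n
  induction n with
  | zero => intro a h0 h1; exact ⟨a, le_rfl, le_rfl, le_antisymm (by simpa using h1) h0⟩
  | succ n IH =>
    intro a h0 h1
    by_cases hz : d a = 0
    · exact ⟨a, le_rfl, Nat.le_add_right _ _, hz⟩
    · have h2 : 0 ≤ d (a + 1) := by have := hstep a; omega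
      have h3 : d (a + 1 + n) ≤ 0 := by
        have : a + 1 + n = a + (n + 1) := by omega
        rw [this]; exact h1
      obtain ⟨t, ht1, ht2, ht3⟩ := IH (a + 1) h2 h3
      exact ⟨t, by omega, by omega, ht3⟩

lemma cpos_step (C : Config nv m) (i j : Fin m) (t : ℕ) :
    Cpos C i t - Cpos C j t ≤ (Cpos C i (t + 1) - Cpos C j (t + 1)) + 1 := by
  have h1 := cnt_succ_le (C.2 i) t
  have h2 := cnt_succ_le (C.2 j) t
  have h3 := cnt_mono (C.2 i) (Nat.le_add_right t 1)
  have h4 := cnt_mono (C.2 j) (Nat.le_add_right t 1)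
  rw [Cpos, Cpos, Cpos, Cpos]
  omega

lemma cpos_last {ν : Fin m → ℤ} {C : Config nv m} (hOk : Ok ν C) (k : Fin m) :
    Cpos C k nv = ν k := by
  rw [Cpos, cnt_of_le le_rfl, hOk k]
  omega

lemma perm_eq_one_of_noCoin {ν : Fin m → ℤ} {C : Config nv m}
    (hν : ∀ i j : Fin m, i < j → ν j < ν i)
    (hOk : Ok ν C) (hT : ¬ (Tset C).Nonempty) : C.1 = 1 := by
  classical
  have hdistinct : ∀ t ≤ nv, ∀ i j : Fin m, i ≠ j → Cpos C i t ≠ Cpos C j t := by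
    intro t ht i j hne heq
    apply hT
    refine ⟨t, ?_⟩
    rw [Tset, Finset.mem_filter, Finset.mem_range]
    exact ⟨by omega, i, j, hne, heq⟩
  have hmono : StrictMono (⇑C.1) := by
    intro i j hij
    set d : ℕ → ℤ := fun t => Cpos C j t - Cpos C i t with hd
    have hlast : d nv < 0 := by
      simp only [hd, cpos_last hOk]
      have := hν i j hij
      omega
    have h0 : d 0 < 0 := by
      by_contra hcon
      push_neg at hcon
      obtain ⟨t, -, ht2, ht3⟩ := ivt d (fun t => cpos_step C j i t) nv 0 hcon (by simpa using hlast.le)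
      have hzero : Cpos C j t = Cpos C i t := by
        have : Cpos C j t - Cpos C i t = 0 := ht3
        omega
      exact hdistinct t (by omega) j i (fun e => (lt_irrefl i (e ▸ hij)) ) hzero
    have h0' : Cpos C j 0 - Cpos C i 0 < 0 := h0
    rw [Cpos, Cpos, cnt_zero, cnt_zero] at h0'
    have : ((C.1 i : Fin m) : ℕ) < ((C.1 j : Fin m) : ℕ) := by omega
    exact this
  have : ⇑C.1 = id := by
    have h := Subsingleton.elim (StrictMono.orderIsoOfSurjective _ hmono C.1.surjective)
      (OrderIso.refl (Fin m))
    exact congrArg (fun e : Fin m ≃o Fin m => (e : Fin m → Fin m)) h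
  exact Equiv.ext fun x => congrFun this x

end NoCoin

section DetExpand
open MvPolynomial
variable {nv m : ℕ}

open scoped Classical in
lemma row_expand (ν : Fin m → ℤ) (σ : Equiv.Perm (Fin m)) :
    (Equiv.Perm.sign σ : ℤ) • ∏ k : Fin m,
      (if 0 ≤ ν k + ((σ k : Fin m) : ℕ) then
        esymm (Fin nv) ℤ (ν k + ((σ k : Fin m) : ℕ)).toNat else 0)
    = ∑ S : Fin m → Finset (Fin nv),
        if Ok ν (σ, S) then (Equiv.Perm.sign σ : ℤ) • wt S else 0 := by
  classical
  by_cases hp : ∀ k : Fin m, 0 ≤ ν k + ((σ k : Fin m) : ℕ)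
  · set n : Fin m → ℕ := fun k => (ν k + ((σ k : Fin m) : ℕ)).toNat with hn
    have h1 : ∏ k : Fin m, (if 0 ≤ ν k + ((σ k : Fin m) : ℕ) then
        esymm (Fin nv) ℤ (ν k + ((σ k : Fin m) : ℕ)).toNat else 0)
        = ∏ k : Fin m, ∑ t ∈ Finset.powersetCard (n k) Finset.univ, ∏ x ∈ t, (X x : MvPolynomial (Fin nv) ℤ) := by
      apply Finset.prod_congr rfl
      intro k _
      rw [if_pos (hp k)]
      rfl
    rw [h1, Finset.prod_univ_sum]
    have h2 : Fintype.piFinset (fun k => Finset.powersetCard (n k) (Finset.univ : Finset (Fin nv)))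
        = Finset.univ.filter (fun S : Fin m → Finset (Fin nv) => Ok ν (σ, S)) := by
      ext S
      rw [Fintype.mem_piFinset, Finset.mem_filter]
      constructor
      · intro h
        refine ⟨Finset.mem_univ _, fun k => ?_⟩
        have := Finset.mem_powersetCard_univ.mp (h k)
        rw [this, hn]
        exact (Int.toNat_of_nonneg (hp k)).symm ▸ rfl
      · rintro ⟨-, h⟩
        intro k
        rw [Finset.mem_powersetCard_univ]
        have hk := h k
        have : ((S k).card : ℤ) = ((n k : ℕ) : ℤ) := by
          rw [hk, hn]; simp [Int.toNat_of_nonneg (hp k)]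
        exact_mod_cast this
    rw [h2, Finset.sum_filter, Finset.smul_sum]
    apply Finset.sum_congr rfl
    intro S _
    rw [smul_ite, smul_zero]
    rfl
  · push_neg at hp
    obtain ⟨k, hk⟩ := hp
    have h1 : ∏ k : Fin m, (if 0 ≤ ν k + ((σ k : Fin m) : ℕ) then
        esymm (Fin nv) ℤ (ν k + ((σ k : Fin m) : ℕ)).toNat else 0) = 0 := by
      apply Finset.prod_eq_zero (Finset.mem_univ k)
      rw [if_neg (not_le.mpr hk)]
    rw [h1, smul_zero]
    symm
    apply Finset.sum_eq_zero
    intro S _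
    rw [if_neg]
    intro hOk
    have hOkk : ((S k).card : ℤ) = ν k + ((σ k : Fin m) : ℕ) := hOk k
    have hcard : (0:ℤ) ≤ ((S k).card : ℤ) := Int.natCast_nonneg _
    omega

open scoped Classical in
lemma det_expand (ν : Fin m → ℤ) :
    Matrix.det (Matrix.of fun i j : Fin m =>
      if 0 ≤ ν i + ((j : Fin m) : ℕ) then esymm (Fin nv) ℤ (ν i + ((j : Fin m) : ℕ)).toNat else 0)
    = ∑ C : Config nv m, if Ok ν C then (Equiv.Perm.sign C.1 : ℤ) • wt C.2 else 0 := by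
  classical
  rw [Matrix.det_apply]
  have h1 : ∀ σ : Equiv.Perm (Fin m),
      (∏ i : Fin m, (Matrix.of fun i j : Fin m =>
        if 0 ≤ ν i + ((j : Fin m) : ℕ) then esymm (Fin nv) ℤ (ν i + ((j : Fin m) : ℕ)).toNat else 0) (σ i) i)
      = ∏ k : Fin m, (if 0 ≤ ν k + ((σ.symm k : Fin m) : ℕ) then
          esymm (Fin nv) ℤ (ν k + ((σ.symm k : Fin m) : ℕ)).toNat else 0) := by
    intro σ
    rw [← Equiv.prod_comp σ (fun k =>
      (if 0 ≤ ν k + ((σ.symm k : Fin m) : ℕ) then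
          esymm (Fin nv) ℤ (ν k + ((σ.symm k : Fin m) : ℕ)).toNat else 0))]
    apply Finset.prod_congr rfl
    intro i _
    rw [Equiv.symm_apply_apply]
    rfl
  calc ∑ σ : Equiv.Perm (Fin m), Equiv.Perm.sign σ • (∏ i : Fin m, (Matrix.of fun i j : Fin m =>
        if 0 ≤ ν i + ((j : Fin m) : ℕ) then esymm (Fin nv) ℤ (ν i + ((j : Fin m) : ℕ)).toNat else 0) (σ i) i)
      = ∑ σ : Equiv.Perm (Fin m), (Equiv.Perm.sign σ : ℤ) • ∏ k : Fin m,
          (if 0 ≤ ν k + ((σ.symm k : Fin m) : ℕ) then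
            esymm (Fin nv) ℤ (ν k + ((σ.symm k : Fin m) : ℕ)).toNat else 0) := by
        apply Finset.sum_congr rfl
        intro σ _
        rw [h1 σ]
        rfl
    _ = ∑ σ : Equiv.Perm (Fin m), (Equiv.Perm.sign σ : ℤ) • ∏ k : Fin m,
          (if 0 ≤ ν k + ((σ k : Fin m) : ℕ) then
            esymm (Fin nv) ℤ (ν k + ((σ k : Fin m) : ℕ)).toNat else 0) := by
        rw [← Equiv.sum_comp (Equiv.inv (Equiv.Perm (Fin m)))
          (fun σ => (Equiv.Perm.sign σ : ℤ) • ∏ k : Fin m,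
            (if 0 ≤ ν k + ((σ k : Fin m) : ℕ) then
              esymm (Fin nv) ℤ (ν k + ((σ k : Fin m) : ℕ)).toNat else 0))]
        apply Finset.sum_congr rfl
        intro σ _
        simp only [Equiv.inv_apply, Equiv.Perm.sign_inv]
        rfl
    _ = ∑ σ : Equiv.Perm (Fin m), ∑ S : Fin m → Finset (Fin nv),
          (if Ok ν (σ, S) then (Equiv.Perm.sign σ : ℤ) • wt S else 0) := by
        apply Finset.sum_congr rfl
        intro σ _
        exact row_expand ν σ
    _ = ∑ C : Config nv m, if Ok ν C then (Equiv.Perm.sign C.1 : ℤ) • wt C.2 else 0 := by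
        rw [Fintype.sum_prod_type]

end DetExpand

section Bridge1
variable {nv m : ℕ}

lemma cardlt {N : ℕ} (a : ℕ) (ha : a ≤ N) :
    ((Finset.univ : Finset (Fin N)).filter fun x => x.val < a).card = a := by
  classical
  apply Finset.card_eq_of_bijective (fun i hi => (⟨i, lt_of_lt_of_le hi ha⟩ : Fin N))
  · intro x hx
    rw [Finset.mem_filter] at hx
    exact ⟨x.val, hx.2, Fin.ext rfl⟩
  · intro i hi
    rw [Finset.mem_filter]
    exact ⟨Finset.mem_univ _, hi⟩
  · intro i j hi hj hij
    exact congrArg Fin.val hij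

lemma dcfilter {k : ℕ} (p : Fin k → Prop) [DecidablePred p]
    (hdc : ∀ a b : Fin k, a ≤ b → p b → p a) (r : Fin k) :
    p r ↔ r.val < (Finset.univ.filter p).card := by
  constructor
  · intro hp
    have hsub : (Finset.univ.filter fun x : Fin k => x.val < r.val + 1) ⊆ Finset.univ.filter p := by
      intro x hx
      rw [Finset.mem_filter] at hx ⊢
      refine ⟨Finset.mem_univ _, hdc x r ?_ hp⟩
      rw [Fin.le_def]
      omega
    have := Finset.card_le_card hsub
    rw [cardlt (r.val + 1) r.isLt] at this
    omega
  · intro h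
    by_contra hnp
    have hsub : Finset.univ.filter p ⊆ Finset.univ.filter fun x : Fin k => x.val < r.val := by
      intro x hx
      rw [Finset.mem_filter] at hx ⊢
      refine ⟨Finset.mem_univ _, ?_⟩
      by_contra hc
      push_neg at hc
      exact hnp (hdc r x (by rw [Fin.le_def]; omega) hx.2)
    have := Finset.card_le_card hsub
    rw [cardlt r.val r.isLt.le] at this
    omega

lemma image_orderEmbOfFin {N k : ℕ} (A : Finset (Fin N)) (h : A.card = k) :
    Finset.image (A.orderEmbOfFin h) Finset.univ = A := by
  classical
  apply Finset.coe_injective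
  rw [Finset.coe_image, Finset.coe_univ, Set.image_univ, Finset.range_orderEmbOfFin]

lemma rank_lt_iff {N k : ℕ} (A : Finset (Fin N)) (h : A.card = k) (r : Fin k) (t : ℕ) :
    (A.orderEmbOfFin h r).val < t ↔ r.val < cnt A t := by
  classical
  have hdc : ∀ a b : Fin k, a ≤ b → (A.orderEmbOfFin h b).val < t →
      (A.orderEmbOfFin h a).val < t := by
    intro a b hab hb
    have := (A.orderEmbOfFin h).monotone hab
    rw [Fin.le_def] at this
    omega
  have hset : A.filter (fun x => x.val < t) = Finset.image (A.orderEmbOfFin h)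
      (Finset.univ.filter fun x => (A.orderEmbOfFin h x).val < t) := by
    conv_lhs => rw [← image_orderEmbOfFin A h]
    rw [Finset.filter_image]
  have hcard : (Finset.univ.filter fun x : Fin k => (A.orderEmbOfFin h x).val < t).card
      = cnt A t := by
    rw [cnt, hset, Finset.card_image_of_injective _ (A.orderEmbOfFin h).injective]
  rw [← hcard]
  exact dcfilter _ hdc r

lemma rank_le_rank {N k : ℕ} (A B : Finset (Fin N)) (hA : A.card = k) {k' : ℕ}
    (hB : B.card = k') (hcnt : ∀ t, cnt B t ≤ cnt A t) (r : Fin k') (hk : k' ≤ k) :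
    A.orderEmbOfFin hA (Fin.castLE hk r) ≤ B.orderEmbOfFin hB r := by
  set b := B.orderEmbOfFin hB r with hb
  have h1 : b.val < b.val + 1 := Nat.lt_succ_self _
  have h2 : r.val < cnt B (b.val + 1) := (rank_lt_iff B hB r (b.val + 1)).mp h1
  have h3 : (Fin.castLE hk r).val < cnt A (b.val + 1) := by
    have := hcnt (b.val + 1)
    simp only [Fin.coe_castLE]
    omega
  have h4 := (rank_lt_iff A hA (Fin.castLE hk r) (b.val + 1)).mpr h3
  rw [Fin.le_def]
  omega

end Bridge1

section Bridge2
variable {nv m L : ℕ}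

def muF (lam : Fin L → ℕ) (m : ℕ) : Fin m → ℕ :=
  fun i => (Finset.univ.filter fun r => (i : ℕ) < lam r).card

lemma muF_anti (lam : Fin L → ℕ) {i j : Fin m} (hij : i ≤ j) :
    muF lam m j ≤ muF lam m i := by
  classical
  apply Finset.card_le_card
  apply Finset.monotone_filter_right
  intro r _ hr
  exact lt_of_le_of_lt (by exact_mod_cast hij) hr

lemma muF_le (lam : Fin L → ℕ) (i : Fin m) : muF lam m i ≤ L := by
  classical
  calc muF lam m i ≤ (Finset.univ : Finset (Fin L)).card := Finset.card_le_card (Finset.filter_subset _ _)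
    _ = L := by simp

lemma dcl (lam : Fin L → ℕ) (hlam : Antitone lam) (j : Fin m) (r : Fin L) :
    ((j : ℕ) < lam r) ↔ (r : ℕ) < muF lam m j := by
  classical
  exact dcfilter (fun r => (j : ℕ) < lam r)
    (fun a b hab hb => lt_of_lt_of_le hb (hlam hab)) r

lemma mem_cells (lam : Fin L → ℕ) (p : Fin L × ℕ) :
    p ∈ skewCells lam (fun _ => 0) ↔ p.2 < lam p.1 := by
  classical
  rw [skewCells, Finset.mem_filter, Finset.mem_product, Finset.mem_range]
  constructor
  · rintro ⟨-, -, h⟩; exact h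
  · intro h
    exact ⟨⟨Finset.mem_univ _, lt_of_lt_of_le h (Finset.le_sup (Finset.mem_univ p.1))⟩,
      Nat.zero_le _, h⟩

def cellOf (lam : Fin L → ℕ) (hlam : Antitone lam) (i : Fin m) (k : Fin (muF lam m i)) :
    {x // x ∈ skewCells lam (fun _ => 0)} :=
  ⟨(⟨k.val, lt_of_lt_of_le k.isLt (muF_le lam i)⟩, (i : ℕ)),
    (mem_cells lam _).mpr ((dcl lam hlam i ⟨k.val, lt_of_lt_of_le k.isLt (muF_le lam i)⟩).mpr k.isLt)⟩

def colIdx (lam : Fin L → ℕ) (hm : ∀ i, lam i ≤ m)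
    (c : {x // x ∈ skewCells lam (fun _ => 0)}) : Fin m :=
  ⟨c.1.2, lt_of_lt_of_le ((mem_cells lam c.1).mp c.2) (hm c.1.1)⟩

lemma rowlt (lam : Fin L → ℕ) (hlam : Antitone lam) (hm : ∀ i, lam i ≤ m)
    (c : {x // x ∈ skewCells lam (fun _ => 0)}) :
    c.1.1.val < muF lam m (colIdx lam hm c) :=
  (dcl lam hlam (colIdx lam hm c) c.1.1).mp ((mem_cells lam c.1).mp c.2)

noncomputable def toT (lam : Fin L → ℕ) (hlam : Antitone lam) (hm : ∀ i, lam i ≤ m)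
    (S : Fin m → Finset (Fin nv)) (hS : ∀ i, (S i).card = muF lam m i)
    (c : {x // x ∈ skewCells lam (fun _ => 0)}) : Fin nv :=
  (S (colIdx lam hm c)).orderEmbOfFin (hS _) ⟨c.1.1.val, rowlt lam hlam hm c⟩

noncomputable def toS (lam : Fin L → ℕ) (hlam : Antitone lam)
    (T : {x // x ∈ skewCells lam (fun _ => 0)} → Fin nv) : Fin m → Finset (Fin nv) :=
  fun i => Finset.image (fun k => T (cellOf lam hlam i k)) Finset.univ

lemma colIdx_cellOf (lam : Fin L → ℕ) (hlam : Antitone lam) (hm : ∀ i, lam i ≤ m)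
    (i : Fin m) (k : Fin (muF lam m i)) :
    colIdx lam hm (cellOf lam hlam i k) = i := Fin.ext rfl

lemma cellOf_colIdx (lam : Fin L → ℕ) (hlam : Antitone lam) (hm : ∀ i, lam i ≤ m)
    (c : {x // x ∈ skewCells lam (fun _ => 0)}) :
    cellOf lam hlam (colIdx lam hm c) ⟨c.1.1.val, rowlt lam hlam hm c⟩ = c := by
  apply Subtype.ext
  exact Prod.ext (Fin.ext rfl) rfl

lemma emb_congr {S : Fin m → Finset (Fin nv)} (hS : ∀ i, (S i).card = muF lam m i)
    {i i' : Fin m} (h : i = i') {a : ℕ} (ha : a < muF lam m i) (ha' : a < muF lam m i') :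
    (S i).orderEmbOfFin (hS i) ⟨a, ha⟩ = (S i').orderEmbOfFin (hS i') ⟨a, ha'⟩ := by
  subst h; rfl

lemma toT_cellOf (lam : Fin L → ℕ) (hlam : Antitone lam) (hm : ∀ i, lam i ≤ m)
    (S : Fin m → Finset (Fin nv)) (hS : ∀ i, (S i).card = muF lam m i)
    (i : Fin m) (k : Fin (muF lam m i)) :
    toT lam hlam hm S hS (cellOf lam hlam i k) = (S i).orderEmbOfFin (hS i) k := by
  rw [toT]
  have h := emb_congr (lam := lam) hS (colIdx_cellOf lam hlam hm i k)
    (rowlt lam hlam hm (cellOf lam hlam i k)) k.isLt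
  rw [h]
  exact congrArg ((S i).orderEmbOfFin (hS i)) (Fin.ext rfl)

end Bridge2

section Bridge3
variable {nv m L : ℕ}

def NC (S : Fin m → Finset (Fin nv)) : Prop :=
  ∀ t ≤ nv, ∀ i j : Fin m, i ≠ j →
    (cnt (S i) t : ℤ) - (i : ℕ) ≠ (cnt (S j) t : ℤ) - (j : ℕ)

lemma not_Tset_iff (S : Fin m → Finset (Fin nv)) :
    ¬ (Tset ((1 : Equiv.Perm (Fin m)), S)).Nonempty ↔ NC S := by
  classical
  rw [Finset.not_nonempty_iff_eq_empty, Finset.eq_empty_iff_forall_notMem]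
  have hC : ∀ (i : Fin m) (t : ℕ),
      Cpos ((1 : Equiv.Perm (Fin m)), S) i t = (cnt (S i) t : ℤ) - (i : ℕ) := fun _ _ => rfl
  constructor
  · intro h t ht i j hne heq
    apply h t
    rw [Tset, Finset.mem_filter, Finset.mem_range]
    refine ⟨by omega, i, j, hne, ?_⟩
    rw [hC, hC]
    exact heq
  · intro h t ht
    rw [Tset, Finset.mem_filter, Finset.mem_range] at ht
    obtain ⟨htr, i, j, hne, heq⟩ := ht
    rw [hC, hC] at heq
    exact h t (by omega) i j hne heq

lemma NC_lt (lam : Fin L → ℕ) (S : Fin m → Finset (Fin nv))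
    (hS : ∀ i, (S i).card = muF lam m i) (hNC : NC S) {i j : Fin m} (hij : i < j)
    {t : ℕ} (ht : t ≤ nv) :
    (cnt (S j) t : ℤ) - (j : ℕ) < (cnt (S i) t : ℤ) - (i : ℕ) := by
  set d : ℕ → ℤ := fun u => ((cnt (S j) u : ℤ) - (j : ℕ)) - ((cnt (S i) u : ℤ) - (i : ℕ))
    with hd
  have hstep : ∀ u, d u ≤ d (u + 1) + 1 := by
    intro u
    have h1 := cnt_succ_le (S i) u
    have h2 := cnt_mono (S j) (Nat.le_add_right u 1)
    simp only [hd]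
    omega
  have hlast : d nv < 0 := by
    have hmu : muF lam m j ≤ muF lam m i := muF_anti lam hij.le
    have hv : (i : ℕ) < (j : ℕ) := hij
    simp only [hd, cnt_of_le le_rfl, hS i, hS j]
    omega
  have hnz : ∀ u ≤ nv, d u ≠ 0 := by
    intro u hu h0
    apply hNC u hu j i hij.ne'
    simp only [hd] at h0
    omega
  by_contra hcon
  push_neg at hcon
  have h0 : 0 ≤ d t := by simp only [hd]; omega
  obtain ⟨u, hu1, hu2, hu3⟩ := ivt d hstep (nv - t) t h0 (by
    have : t + (nv - t) = nv := by omega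
    rw [this]; exact hlast.le)
  exact hnz u (by omega) hu3

end Bridge3

section Bridge4
variable {nv m L : ℕ}

lemma cnt_adj (lam : Fin L → ℕ) (S : Fin m → Finset (Fin nv))
    (hS : ∀ i, (S i).card = muF lam m i) (hNC : NC S) {i j : Fin m}
    (hij : (i : ℕ) + 1 = (j : ℕ)) (t : ℕ) : cnt (S j) t ≤ cnt (S i) t := by
  have hlt : i < j := by rw [Fin.lt_def]; omega
  rcases le_or_gt t nv with ht | ht
  · have h := NC_lt lam S hS hNC hlt ht
    omega
  · rw [cnt_of_le ht.le, cnt_of_le ht.le, hS i, hS j]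
    exact muF_anti lam hlt.le

lemma toT_row_adj (lam : Fin L → ℕ) (hlam : Antitone lam) (hm : ∀ i, lam i ≤ m)
    (S : Fin m → Finset (Fin nv)) (hS : ∀ i, (S i).card = muF lam m i) (hNC : NC S)
    (c c' : {x // x ∈ skewCells lam (fun _ => 0)})
    (hrow : c.1.1 = c'.1.1) (hcol : c'.1.2 = c.1.2 + 1) :
    toT lam hlam hm S hS c ≤ toT lam hlam hm S hS c' := by
  set i := colIdx lam hm c with hi
  set j := colIdx lam hm c' with hj
  have hij : (i : ℕ) + 1 = (j : ℕ) := by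
    simp only [hi, hj, colIdx]
    omega
  have hcnt : ∀ t, cnt (S j) t ≤ cnt (S i) t := cnt_adj lam S hS hNC hij
  have hk : muF lam m j ≤ muF lam m i := muF_anti lam (le_of_lt (by rw [Fin.lt_def]; omega))
  have key := rank_le_rank (S i) (S j) (hS i) (hS j) hcnt
    ⟨c'.1.1.val, rowlt lam hlam hm c'⟩ hk
  have e1 : (Fin.castLE hk (⟨c'.1.1.val, rowlt lam hlam hm c'⟩ : Fin (muF lam m j)))
      = (⟨c.1.1.val, rowlt lam hlam hm c⟩ : Fin (muF lam m i)) := by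
    apply Fin.ext
    simp only [Fin.coe_castLE]
    exact (congrArg Fin.val hrow).symm
  rw [toT, toT]
  rw [e1] at key
  exact key

lemma toT_row_chain (lam : Fin L → ℕ) (hlam : Antitone lam) (hm : ∀ i, lam i ≤ m)
    (S : Fin m → Finset (Fin nv)) (hS : ∀ i, (S i).card = muF lam m i) (hNC : NC S)
    (n : ℕ) : ∀ (c c' : {x // x ∈ skewCells lam (fun _ => 0)}),
    c.1.1 = c'.1.1 → c'.1.2 = c.1.2 + n →
    toT lam hlam hm S hS c ≤ toT lam hlam hm S hS c' := by
  induction n with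
  | zero =>
    intro c c' hrow hcol
    have : c = c' := Subtype.ext (Prod.ext hrow (by omega))
    rw [this]
  | succ n IH =>
    intro c c' hrow hcol
    have hmem : (c.1.1, c.1.2 + n) ∈ skewCells lam (fun _ => 0) := by
      rw [mem_cells]
      have h1 : c'.1.2 < lam c'.1.1 := (mem_cells lam c'.1).mp c'.2
      rw [← hrow] at h1
      show c.1.2 + n < lam c.1.1
      omega
    set c'' : {x // x ∈ skewCells lam (fun _ => 0)} := ⟨(c.1.1, c.1.2 + n), hmem⟩ with hc''
    have h1 := IH c c'' rfl rfl
    have h2 := toT_row_adj lam hlam hm S hS hNC c'' c' hrow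
      (by show c'.1.2 = c.1.2 + n + 1; omega)
    exact le_trans h1 h2

lemma IsSSYT_toT (lam : Fin L → ℕ) (hlam : Antitone lam) (hm : ∀ i, lam i ≤ m)
    (S : Fin m → Finset (Fin nv)) (hS : ∀ i, (S i).card = muF lam m i) (hNC : NC S) :
    IsSSYT lam (fun _ => 0) (toT lam hlam hm S hS) := by
  constructor
  · intro c c' hrow hcol
    exact toT_row_chain lam hlam hm S hS hNC (c'.1.2 - c.1.2) c c' hrow (by omega)
  · intro c c' hcol hrowlt
    have hcc : colIdx lam hm c = colIdx lam hm c' := Fin.ext hcol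
    rw [toT, toT]
    have hlt2 : c.1.1.val < muF lam m (colIdx lam hm c') := by
      rw [← hcc]; exact rowlt lam hlam hm c
    have e := emb_congr (lam := lam) hS hcc (rowlt lam hlam hm c) hlt2
    rw [e]
    apply ((S (colIdx lam hm c')).orderEmbOfFin (hS _)).strictMono
    rw [Fin.lt_def]
    exact hrowlt

end Bridge4

section Bridge5
variable {nv m L : ℕ}

lemma toS_inj (lam : Fin L → ℕ) (hlam : Antitone lam)
    (T : {x // x ∈ skewCells lam (fun _ => 0)} → Fin nv) (hT : IsSSYT lam (fun _ => 0) T)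
    (i : Fin m) : Function.Injective (fun k : Fin (muF lam m i) => T (cellOf lam hlam i k)) := by
  have hsm : StrictMono (fun k : Fin (muF lam m i) => T (cellOf lam hlam i k)) := by
    intro k k' hkk
    apply hT.2 (cellOf lam hlam i k) (cellOf lam hlam i k') rfl
    rw [Fin.lt_def]
    exact hkk
  exact hsm.injective

lemma card_toS (lam : Fin L → ℕ) (hlam : Antitone lam)
    (T : {x // x ∈ skewCells lam (fun _ => 0)} → Fin nv) (hT : IsSSYT lam (fun _ => 0) T)
    (i : Fin m) : (toS lam hlam T i).card = muF lam m i := by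
  rw [toS, Finset.card_image_of_injective _ (toS_inj lam hlam T hT i)]
  simp

lemma cnt_toS (lam : Fin L → ℕ) (hlam : Antitone lam)
    (T : {x // x ∈ skewCells lam (fun _ => 0)} → Fin nv) (hT : IsSSYT lam (fun _ => 0) T)
    (i : Fin m) (t : ℕ) : cnt (toS lam hlam T i) t =
      (Finset.univ.filter fun k : Fin (muF lam m i) => (T (cellOf lam hlam i k)).val < t).card := by
  rw [cnt, toS, Finset.filter_image,
    Finset.card_image_of_injective _ (toS_inj lam hlam T hT i)]

lemma cnt_toS_le (lam : Fin L → ℕ) (hlam : Antitone lam)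
    (T : {x // x ∈ skewCells lam (fun _ => 0)} → Fin nv) (hT : IsSSYT lam (fun _ => 0) T)
    {i j : Fin m} (hij : i ≤ j) (t : ℕ) :
    cnt (toS lam hlam T j) t ≤ cnt (toS lam hlam T i) t := by
  rw [cnt_toS lam hlam T hT, cnt_toS lam hlam T hT]
  have hk : muF lam m j ≤ muF lam m i := muF_anti lam hij
  apply Finset.card_le_card_of_injOn (fun k => Fin.castLE hk k)
  · intro k hk2
    simp only [Finset.coe_filter, Set.mem_setOf_eq] at hk2 ⊢
    refine ⟨Finset.mem_univ _, ?_⟩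
    have hle : T (cellOf lam hlam i (Fin.castLE hk k)) ≤ T (cellOf lam hlam j k) := by
      refine hT.1 (cellOf lam hlam i (Fin.castLE hk k)) (cellOf lam hlam j k) ?_ ?_
      · exact Fin.ext rfl
      · show (i : ℕ) ≤ (j : ℕ)
        exact hij
    have := Fin.le_def.mp hle
    omega
  · intro a _ b _ hab
    exact Fin.castLE_injective hk hab

lemma NC_toS (lam : Fin L → ℕ) (hlam : Antitone lam)
    (T : {x // x ∈ skewCells lam (fun _ => 0)} → Fin nv) (hT : IsSSYT lam (fun _ => 0) T) :
    NC (m := m) (toS lam hlam T) := by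
  intro t ht i j hne heq
  rcases lt_or_gt_of_ne hne with hij | hij
  · have h1 := cnt_toS_le lam hlam T hT hij.le t
    have hv : (i : ℕ) < (j : ℕ) := hij
    omega
  · have h1 := cnt_toS_le lam hlam T hT hij.le t
    have hv : (j : ℕ) < (i : ℕ) := hij
    omega

lemma toS_toT (lam : Fin L → ℕ) (hlam : Antitone lam) (hm : ∀ i, lam i ≤ m)
    (S : Fin m → Finset (Fin nv)) (hS : ∀ i, (S i).card = muF lam m i) :
    toS lam hlam (toT lam hlam hm S hS) = S := by
  funext i
  rw [toS]
  have h1 : (fun k : Fin (muF lam m i) => toT lam hlam hm S hS (cellOf lam hlam i k))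
      = fun k => (S i).orderEmbOfFin (hS i) k := by
    funext k
    exact toT_cellOf lam hlam hm S hS i k
  rw [h1]
  exact image_orderEmbOfFin (S i) (hS i)

lemma toT_toS (lam : Fin L → ℕ) (hlam : Antitone lam) (hm : ∀ i, lam i ≤ m)
    (T : {x // x ∈ skewCells lam (fun _ => 0)} → Fin nv) (hT : IsSSYT lam (fun _ => 0) T)
    (hS : ∀ i, (toS lam hlam T i).card = muF lam m i) :
    toT lam hlam hm (toS lam hlam T) hS = T := by
  funext c
  set i := colIdx lam hm c with hi
  have hg : (fun k : Fin (muF lam m i) => T (cellOf lam hlam i k))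
      = (toS lam hlam T i).orderEmbOfFin (hS i) := by
    apply Finset.orderEmbOfFin_unique
    · intro k
      rw [toS]
      exact Finset.mem_image_of_mem _ (Finset.mem_univ k)
    · intro k k' hkk
      apply hT.2 (cellOf lam hlam i k) (cellOf lam hlam i k') rfl
      rw [Fin.lt_def]
      exact hkk
  rw [toT, ← hg]
  show T (cellOf lam hlam i ⟨c.1.1.val, rowlt lam hlam hm c⟩) = T c
  rw [cellOf_colIdx lam hlam hm c]

end Bridge5

section Bridge6
open MvPolynomial
variable {nv m L : ℕ}

lemma wt_toT (lam : Fin L → ℕ) (hlam : Antitone lam) (hm : ∀ i, lam i ≤ m)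
    (S : Fin m → Finset (Fin nv)) (hS : ∀ i, (S i).card = muF lam m i) :
    (∏ c : {x // x ∈ skewCells lam (fun _ => 0)}, (X (toT lam hlam hm S hS c)
      : MvPolynomial (Fin nv) ℤ)) = wt S := by
  classical
  have hbij : Function.Bijective
      (fun p : Σ i : Fin m, Fin (muF lam m i) => cellOf lam hlam p.1 p.2) := by
    constructor
    · rintro ⟨i, k⟩ ⟨i', k'⟩ hpq
      simp only at hpq
      have h2 : (i : ℕ) = (i' : ℕ) := congrArg (fun c => c.1.2) hpq
      have hii : i = i' := Fin.ext h2
      subst hii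
      have h1 : (k : ℕ) = (k' : ℕ) := congrArg (fun c => c.1.1.val) hpq
      have hkk : k = k' := Fin.ext h1
      subst hkk
      rfl
    · intro c
      exact ⟨⟨colIdx lam hm c, ⟨c.1.1.val, rowlt lam hlam hm c⟩⟩, cellOf_colIdx lam hlam hm c⟩
  rw [← Fintype.prod_bijective _ hbij
    (fun p : Σ i : Fin m, Fin (muF lam m i) => (X (toT lam hlam hm S hS (cellOf lam hlam p.1 p.2)) : MvPolynomial (Fin nv) ℤ))
    (fun c => X (toT lam hlam hm S hS c)) (fun p => rfl)]
  rw [← Finset.univ_sigma_univ, Finset.prod_sigma]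
  rw [wt]
  apply Finset.prod_congr rfl
  intro i _
  have h1 : ∀ k : Fin (muF lam m i), toT lam hlam hm S hS (cellOf lam hlam i k)
      = (S i).orderEmbOfFin (hS i) k := toT_cellOf lam hlam hm S hS i
  calc ∏ k : Fin (muF lam m i), (X (toT lam hlam hm S hS (cellOf lam hlam i k))
        : MvPolynomial (Fin nv) ℤ)
      = ∏ k : Fin (muF lam m i), X ((S i).orderEmbOfFin (hS i) k) := by
        apply Finset.prod_congr rfl
        intro k _
        rw [h1 k]
    _ = ∏ x ∈ S i, X x := by
        conv_rhs => rw [← image_orderEmbOfFin (S i) (hS i)]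
        rw [Finset.prod_image (fun a _ b _ hab => ((S i).orderEmbOfFin (hS i)).injective hab)]

open scoped Classical in
lemma fixed_eq (lam : Fin L → ℕ) (hlam : Antitone lam) (hm : ∀ i, lam i ≤ m) :
    (∑ S : Fin m → Finset (Fin nv),
      if (∀ i, (S i).card = muF lam m i) ∧ ¬ (Tset ((1 : Equiv.Perm (Fin m)), S)).Nonempty
      then wt S else 0)
    = skewSchur nv lam (fun _ => 0) := by
  rw [skewSchur, ← Finset.sum_filter, ← Finset.sum_filter]
  refine Finset.sum_bij'
    (i := fun S hSmem => toT lam hlam hm S (fun i => ((Finset.mem_filter.mp hSmem).2.1 i)))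
    (j := fun T hTmem => toS lam hlam T) ?hi ?hj ?li ?ri ?hh
  case hi =>
    intro S hSmem
    rw [Finset.mem_filter] at hSmem ⊢
    refine ⟨Finset.mem_univ _, ?_⟩
    exact IsSSYT_toT lam hlam hm S _ ((not_Tset_iff S).mp hSmem.2.2)
  case hj =>
    intro T hTmem
    have hT := (Finset.mem_filter.mp hTmem).2
    rw [Finset.mem_filter]
    refine ⟨Finset.mem_univ _, fun i => card_toS lam hlam T hT i, ?_⟩
    rw [not_Tset_iff]
    exact NC_toS lam hlam T hT
  case li =>
    intro S hSmem
    exact toS_toT lam hlam hm S _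
  case ri =>
    intro T hTmem
    have hT := (Finset.mem_filter.mp hTmem).2
    exact toT_toS lam hlam hm T hT _
  case hh =>
    intro S hSmem
    exact (wt_toT lam hlam hm S _).symm

end Bridge6

section Final
open MvPolynomial
variable {nv m : ℕ}

open scoped Classical in
lemma sum_config_eq (ν : Fin m → ℤ) (hν : ∀ i j : Fin m, i < j → ν j < ν i) :
    (∑ C : Config nv m, if Ok ν C then (Equiv.Perm.sign C.1 : ℤ) • wt C.2 else 0)
    = ∑ S : Fin m → Finset (Fin nv),
        if Ok ν ((1 : Equiv.Perm (Fin m)), S) ∧ ¬ (Tset ((1 : Equiv.Perm (Fin m)), S)).Nonempty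
        then wt S else 0 := by
  classical
  have hsplit : ∀ C : Config nv m,
      (if Ok ν C then (Equiv.Perm.sign C.1 : ℤ) • wt C.2 else 0)
      = (if Ok ν C ∧ (Tset C).Nonempty then (Equiv.Perm.sign C.1 : ℤ) • wt C.2 else 0)
        + (if Ok ν C ∧ ¬ (Tset C).Nonempty then (Equiv.Perm.sign C.1 : ℤ) • wt C.2 else 0) := by
    intro C
    by_cases h1 : Ok ν C
    · by_cases h2 : (Tset C).Nonempty <;> simp [h1, h2]
    · simp [h1]
  rw [Finset.sum_congr rfl (fun C _ => hsplit C), Finset.sum_add_distrib]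
  have hzero : (∑ C : Config nv m,
      if Ok ν C ∧ (Tset C).Nonempty then (Equiv.Perm.sign C.1 : ℤ) • wt C.2 else 0) = 0 := by
    rw [← Finset.sum_filter]
    exact cancel_sum ν
  rw [hzero, zero_add, Fintype.sum_prod_type]
  rw [Finset.sum_eq_single (1 : Equiv.Perm (Fin m))]
  · apply Finset.sum_congr rfl
    intro S _
    by_cases h : Ok ν ((1 : Equiv.Perm (Fin m)), S) ∧
        ¬ (Tset ((1 : Equiv.Perm (Fin m)), S)).Nonempty
    · rw [if_pos h, if_pos h]
      simp
    · rw [if_neg h, if_neg h]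
  · intro σ _ hσ
    apply Finset.sum_eq_zero
    intro S _
    rw [if_neg]
    rintro ⟨hOk, hT⟩
    exact hσ (perm_eq_one_of_noCoin hν hOk hT)
  · intro h
    exact absurd (Finset.mem_univ _) h

end Final

open MvPolynomial in
theorem dual_jacobi_trudi (nv m : ℕ) {L : ℕ} (lam : Fin L → ℕ)
    (hlam : Antitone lam) (hm : ∀ i, lam i ≤ m) :
    skewSchur nv lam (fun _ => 0) =
      Matrix.det (Matrix.of fun i j : Fin m =>
        if 0 ≤ (((Finset.univ.filter fun r => (i : ℕ) < lam r).card : ℤ)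
            - (i : ℤ) + (j : ℤ)) then
          esymm (Fin nv) ℤ (((Finset.univ.filter fun r => (i : ℕ) < lam r).card : ℤ)
            - (i : ℤ) + (j : ℤ)).toNat
        else 0) := by
  classical
  have hentry : (Matrix.of fun i j : Fin m =>
        if 0 ≤ (((Finset.univ.filter fun r => (i : ℕ) < lam r).card : ℤ)
            - (i : ℤ) + (j : ℤ)) then
          esymm (Fin nv) ℤ (((Finset.univ.filter fun r => (i : ℕ) < lam r).card : ℤ)
            - (i : ℤ) + (j : ℤ)).toNat
        else 0)
      = (Matrix.of fun i j : Fin m =>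
        if 0 ≤ (fun k : Fin m => ((muF lam m k : ℤ) - (k : ℕ))) i + ((j : Fin m) : ℕ) then
          esymm (Fin nv) ℤ ((fun k : Fin m => ((muF lam m k : ℤ) - (k : ℕ))) i + ((j : Fin m) : ℕ)).toNat
        else 0) := by
    ext i j
    rfl
  rw [hentry, det_expand (fun k : Fin m => ((muF lam m k : ℤ) - (k : ℕ)))]
  rw [sum_config_eq _ (by
    intro i j hij
    have h1 : muF lam m j ≤ muF lam m i := muF_anti lam hij.le
    have h2 : (i : ℕ) < (j : ℕ) := hij
    omega)]
  rw [← fixed_eq lam hlam hm]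
  apply Finset.sum_congr rfl
  intro S _
  have hiff : Ok (fun k : Fin m => ((muF lam m k : ℤ) - (k : ℕ))) ((1 : Equiv.Perm (Fin m)), S)
      ↔ ∀ i, (S i).card = muF lam m i := by
    constructor
    · intro h i
      have hk : ((S i).card : ℤ) = (muF lam m i : ℤ) - ((i : ℕ) : ℤ)
          + (((1 : Equiv.Perm (Fin m)) i : Fin m) : ℕ) := h i
      have h1 : (((1 : Equiv.Perm (Fin m)) i : Fin m) : ℕ) = (i : ℕ) := rfl
      rw [h1] at hk
      omega
    · intro h i
      have hgoal : ((S i).card : ℤ) = ((muF lam m i : ℤ) - ((i : ℕ) : ℤ)) + ((i : ℕ) : ℤ) := by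
        rw [h i]
        omega
      exact hgoal
  by_cases h : (∀ i, (S i).card = muF lam m i) ∧
      ¬ (Tset ((1 : Equiv.Perm (Fin m)), S)).Nonempty
  · rw [if_pos h, if_pos ⟨hiff.mpr h.1, h.2⟩]
  · rw [if_neg h, if_neg]
    rintro ⟨h1, h2⟩
    exact h ⟨hiff.mp h1, h2⟩
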